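/- Let m ≥ 1 and for each k ∈ {1,…,m} let s_k ≥ 1, let P_k be an s_k×s_k complex orthogonal projection and M_k an s_k×s_k complex matrix with M_k P_k = P_k M_k = P_k. Let Δ ∈ [0,1] satisfy ‖M_k − P_k‖ ≤ 1 − Δ for every k. Define the family Kronecker products M and P as the matrices indexed by the product type ∏_k Fin(s_k), with entries M(i,j) = ∏_k M_k(i_k, j_k) and P(i,j) = ∏_k P_k(i_k, j_k). Then (1−Δ)²·I + (1−(1−Δ)²)·P − M·M† is positive semidefinite, where I is the identity matrix on the product index type. -/

import Mathlib

open Matrix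
open scoped ComplexOrder

/-- The operator norm of a square complex matrix (largest singular value). -/
noncomputable def opNorm {n : Type*} [Fintype n] [DecidableEq n] (A : Matrix n n ℂ) : ℝ :=
  ‖Matrix.toEuclideanCLM (𝕜 := ℂ) A‖

/-- The "family Kronecker product" of a family of square matrices `A k` of sizes `s k`:
the matrix on the index set `∀ k, Fin (s k)` with `(i, j)` entry `∏ k, A k (i k) (j k)`. -/
def famKron {m : ℕ} {s : Fin m → ℕ} (A : (k : Fin m) → Matrix (Fin (s k)) (Fin (s k)) ℂ) :
    Matrix ((k : Fin m) → Fin (s k)) ((k : Fin m) → Fin (s k)) ℂ :=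
  Matrix.of fun i j => ∏ k, A k (i k) (j k)

open scoped Matrix.Norms.L2Operator

section Aux

variable {m : ℕ} {s : Fin m → ℕ}

lemma famKron_mul (A B : (k : Fin m) → Matrix (Fin (s k)) (Fin (s k)) ℂ) :
    famKron A * famKron B = famKron (fun k => A k * B k) := by
  ext i j
  simp only [famKron, Matrix.mul_apply, Matrix.of_apply]
  rw [Finset.prod_univ_sum (fun k => (Finset.univ : Finset (Fin (s k))))
      (fun k y => A k (i k) y * B k y (j k)), Fintype.piFinset_univ]
  exact Finset.sum_congr rfl fun x _ => Finset.prod_mul_distrib.symm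

lemma famKron_conjT (A : (k : Fin m) → Matrix (Fin (s k)) (Fin (s k)) ℂ) :
    (famKron A)ᴴ = famKron (fun k => (A k)ᴴ) := by
  ext i j
  simp [famKron, Matrix.conjTranspose_apply, star_prod]

lemma famKron_one : famKron (fun k => (1 : Matrix (Fin (s k)) (Fin (s k)) ℂ)) = 1 := by
  ext i j
  simp [famKron, Matrix.one_apply, Finset.prod_boole, funext_iff]

lemma famKron_posSemidef {A : (k : Fin m) → Matrix (Fin (s k)) (Fin (s k)) ℂ}
    (hA : ∀ k, (A k).PosSemidef) : (famKron A).PosSemidef := by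
  open scoped MatrixOrder in
  choose B hB using fun k => CStarAlgebra.nonneg_iff_eq_star_mul_self.mp (hA k).nonneg
  have : famKron A = (famKron B)ᴴ * famKron B := by
    rw [famKron_conjT, famKron_mul]
    exact congrArg famKron (funext fun k => hB k)
  rw [this]
  exact Matrix.posSemidef_conjTranspose_mul_self _

lemma famKron_smul (c : Fin m → ℂ) (A : (k : Fin m) → Matrix (Fin (s k)) (Fin (s k)) ℂ) :
    famKron (fun k => c k • A k) = (∏ k, c k) • famKron A := by
  ext i j
  simp [famKron, Finset.prod_mul_distrib]

lemma famKron_add_expand (A B : (k : Fin m) → Matrix (Fin (s k)) (Fin (s k)) ℂ) :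
    famKron (fun k => A k + B k)
      = ∑ S : Finset (Fin m), famKron (fun k => if k ∈ S then A k else B k) := by
  have key : ∀ (i j : (k : Fin m) → Fin (s k)) (t : Finset (Fin m)),
      (∏ k : Fin m, (if k ∈ t then A k else B k) (i k) (j k))
        = (∏ k ∈ t, A k (i k) (j k)) * ∏ k ∈ Finset.univ \ t, B k (i k) (j k) := by
    intro i j t
    rw [Finset.prod_congr rfl (fun k _ => show (if k ∈ t then A k else B k) (i k) (j k)
        = if k ∈ t then A k (i k) (j k) else B k (i k) (j k) by split_ifs <;> rfl),
      Finset.prod_ite]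
    congr 1
    · exact Finset.prod_congr (by rw [Finset.filter_mem_eq_inter, Finset.univ_inter])
        fun _ _ => rfl
    · exact Finset.prod_congr (by rw [Finset.filter_not, Finset.filter_mem_eq_inter,
        Finset.univ_inter]) fun _ _ => rfl
  ext i j
  rw [Matrix.sum_apply]
  simp only [famKron, Matrix.of_apply, Matrix.add_apply]
  rw [Finset.prod_add, ← Finset.powerset_univ]
  exact Finset.sum_congr rfl fun t _ => (key i j t).symm

lemma famKron_sub_single (F G : (k : Fin m) → Matrix (Fin (s k)) (Fin (s k)) ℂ) (j : Fin m)
    (hFG : ∀ k, k ≠ j → F k = G k) :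
    famKron F - famKron G = famKron (Function.update F j (F j - G j)) := by
  ext i l
  simp only [famKron, Matrix.sub_apply, Matrix.of_apply]
  rw [← Finset.mul_prod_erase Finset.univ _ (Finset.mem_univ j),
      ← Finset.mul_prod_erase Finset.univ (fun k => G k (i k) (l k)) (Finset.mem_univ j),
      ← Finset.mul_prod_erase Finset.univ
        (fun k => (Function.update F j (F j - G j) k) (i k) (l k)) (Finset.mem_univ j)]
  have h1 : ∀ k ∈ Finset.univ.erase j,
      (Function.update F j (F j - G j) k) (i k) (l k) = F k (i k) (l k) := by
    intro k hk
    rw [Function.update_of_ne (Finset.ne_of_mem_erase hk)]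
  have h2 : ∀ k ∈ Finset.univ.erase j, G k (i k) (l k) = F k (i k) (l k) := by
    intro k hk
    rw [hFG k (Finset.ne_of_mem_erase hk)]
  rw [Finset.prod_congr rfl h1, Finset.prod_congr rfl h2, Function.update_self]
  simp [Matrix.sub_apply, sub_mul]

lemma famKron_mono {A B : (k : Fin m) → Matrix (Fin (s k)) (Fin (s k)) ℂ}
    (hA : ∀ k, (A k).PosSemidef) (hBA : ∀ k, (B k - A k).PosSemidef) :
    (famKron B - famKron A).PosSemidef := by
  have hB : ∀ k, (B k).PosSemidef := fun k => by
    have := (hBA k).add (hA k)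
    simpa using this
  have main : ∀ T : Finset (Fin m),
      (famKron (fun k => if k ∈ T then B k else A k) - famKron A).PosSemidef := by
    intro T
    induction T using Finset.induction_on with
    | empty => simp [Matrix.PosSemidef.zero]
    | insert a T hnotmem ih =>
      have hsingle := famKron_sub_single (fun k => if k ∈ insert a T then B k else A k)
        (fun k => if k ∈ T then B k else A k) a
        (fun k hk => by simp [Finset.mem_insert, hk])
      have hstep : (famKron (fun k => if k ∈ insert a T then B k else A k)
          - famKron (fun k => if k ∈ T then B k else A k)).PosSemidef := by
        rw [hsingle]
        apply famKron_posSemidef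
        intro k
        rcases eq_or_ne k a with rfl | hka
        · rw [Function.update_self]
          simp only [Finset.mem_insert, true_or, if_true, hnotmem, if_neg hnotmem]
          exact hBA k
        · rw [Function.update_of_ne hka]
          split_ifs <;> [exact hB k; exact hA k]
      have := hstep.add (ih)
      simpa using this
  have := main Finset.univ
  simpa using this

end Aux

lemma dotProduct_star_self_eq_norm {n : Type*} [Fintype n] (z : n → ℂ) :
    star z ⬝ᵥ z = ((‖(WithLp.equiv 2 (n → ℂ)).symm z‖ ^ 2 : ℝ) : ℂ) := by
  rw [EuclideanSpace.norm_eq, Real.sq_sqrt (by positivity)]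
  push_cast
  simp only [dotProduct, Pi.star_apply]
  refine Finset.sum_congr rfl fun i _ => ?_
  rw [show star (z i) = (starRingEnd ℂ) (z i) from rfl, RCLike.conj_mul]
  norm_num

lemma smul_one_sub_self_mul_conjTranspose_posSemidef {n : Type*} [Fintype n] [DecidableEq n]
    (Q : Matrix n n ℂ) (r : ℝ) (hQ : opNorm Q ≤ r) :
    (((r ^ 2 : ℝ) : ℂ) • 1 - Q * Qᴴ).PosSemidef := by
  refine .of_dotProduct_mulVec_nonneg ?_ ?_
  · unfold Matrix.IsHermitian
    rw [conjTranspose_sub, conjTranspose_smul, conjTranspose_one, conjTranspose_mul,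
      conjTranspose_conjTranspose]
    congr 1
    simp [Complex.star_def]
  · intro x
    have hmv : (((r ^ 2 : ℝ) : ℂ) • 1 - Q * Qᴴ) *ᵥ x
        = ((r ^ 2 : ℝ) : ℂ) • x - Q *ᵥ (Qᴴ *ᵥ x) := by
      rw [Matrix.sub_mulVec, Matrix.smul_mulVec, Matrix.one_mulVec, mulVec_mulVec]
    rw [hmv, dotProduct_sub, dotProduct_smul]
    have key : star x ⬝ᵥ (Q *ᵥ (Qᴴ *ᵥ x)) = star (Qᴴ *ᵥ x) ⬝ᵥ (Qᴴ *ᵥ x) := by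
      rw [Matrix.dotProduct_mulVec]
      congr 1
      rw [Matrix.star_mulVec, conjTranspose_conjTranspose]
    rw [key, dotProduct_star_self_eq_norm, dotProduct_star_self_eq_norm]
    set y : EuclideanSpace ℂ n := (WithLp.equiv 2 (n → ℂ)).symm (Qᴴ *ᵥ x)
    set xE : EuclideanSpace ℂ n := (WithLp.equiv 2 (n → ℂ)).symm x
    have hy : ‖y‖ ≤ r * ‖xE‖ := by
      have h1 : ‖y‖ ≤ ‖Qᴴ‖ * ‖xE‖ := by
        have := Qᴴ.l2_opNorm_mulVec xE
        simpa [y, xE] using this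
      have h2 : ‖Qᴴ‖ = ‖Q‖ := Q.l2_opNorm_conjTranspose
      have h3 : ‖Q‖ ≤ r := hQ
      calc ‖y‖ ≤ ‖Qᴴ‖ * ‖xE‖ := h1
        _ ≤ r * ‖xE‖ := by rw [h2]; exact mul_le_mul_of_nonneg_right h3 (norm_nonneg _)
    have hfinal : (‖y‖ ^ 2 : ℝ) ≤ r ^ 2 * ‖xE‖ ^ 2 := by
      have := mul_self_le_mul_self (norm_nonneg y) hy
      calc (‖y‖^2 : ℝ) = ‖y‖ * ‖y‖ := sq ‖y‖
        _ ≤ (r * ‖xE‖) * (r * ‖xE‖) := this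
        _ = r^2 * ‖xE‖^2 := by ring
    have hpos : (0:ℝ) ≤ r ^ 2 * ‖xE‖ ^ 2 - ‖y‖ ^ 2 := by linarith
    calc (0 : ℂ) ≤ ((r ^ 2 * ‖xE‖ ^ 2 - ‖y‖ ^ 2 : ℝ) : ℂ) :=
          by exact_mod_cast Complex.zero_le_real.mpr hpos
      _ = ((r ^ 2 : ℝ) : ℂ) * ((‖xE‖ ^ 2 : ℝ) : ℂ) - ((‖y‖ ^ 2 : ℝ) : ℂ) := by push_cast; ring

lemma posSemidef_real_smul {n : Type*} [Fintype n] {A : Matrix n n ℂ} (hA : A.PosSemidef)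
    {r : ℝ} (hr : 0 ≤ r) : (((r : ℝ) : ℂ) • A).PosSemidef := by
  refine .of_dotProduct_mulVec_nonneg ?_ ?_
  · unfold Matrix.IsHermitian
    rw [conjTranspose_smul, hA.1]
    congr 1
    simp [Complex.star_def]
  · intro x
    rw [Matrix.smul_mulVec, dotProduct_smul, smul_eq_mul]
    exact mul_nonneg (by exact_mod_cast Complex.zero_le_real.mpr hr) (hA.dotProduct_mulVec_nonneg x)

set_option maxHeartbeats 1000000 in
/-- Lemma S3.  For each `k`, let `P k` be an orthogonal projection and
`M k` a matrix with `M k * P k = P k * M k = P k` and `‖M k - P k‖ ≤ 1 - Δ`.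
Then `(1-Δ)² • 1 + (1-(1-Δ)²) • (⊗ₖ P k) - (⊗ₖ M k) (⊗ₖ M k)ᴴ` is positive semidefinite. -/
theorem tensor_gram_dominated_by_haar_projector
    (m : ℕ) (hm : 1 ≤ m) (s : Fin m → ℕ) (hs : ∀ k, 1 ≤ s k)
    (P M : (k : Fin m) → Matrix (Fin (s k)) (Fin (s k)) ℂ)
    (hP_herm : ∀ k, (P k)ᴴ = P k) (hP_idem : ∀ k, P k * P k = P k)
    (hMP : ∀ k, M k * P k = P k) (hPM : ∀ k, P k * M k = P k)
    (Δ : ℝ) (hΔ0 : 0 ≤ Δ) (hΔ1 : Δ ≤ 1)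
    (hgap : ∀ k, opNorm (M k - P k) ≤ 1 - Δ) :
    ((((1 - Δ) ^ 2 : ℝ) : ℂ) • (1 : Matrix ((k : Fin m) → Fin (s k)) ((k : Fin m) → Fin (s k)) ℂ)
      + ((1 - (1 - Δ) ^ 2 : ℝ) : ℂ) • famKron P
      - famKron M * (famKron M)ᴴ).PosSemidef := by
  classical
  set c : ℝ := (1 - Δ) ^ 2 with hc_def
  have hc0 : 0 ≤ c := sq_nonneg _
  have hc1 : c ≤ 1 := by
    rw [hc_def]
    calc (1 - Δ)^2 ≤ 1^2 := by nlinarith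
      _ = 1 := one_pow 2
  set Q : (k : Fin m) → Matrix (Fin (s k)) (Fin (s k)) ℂ := fun k => M k - P k with hQ_def
  set R : (k : Fin m) → Matrix (Fin (s k)) (Fin (s k)) ℂ := fun k => Q k * (Q k)ᴴ with hR_def
  -- pointwise facts
  have hPk : ∀ k, (P k).PosSemidef := by
    intro k
    have : P k = (P k)ᴴ * P k := by rw [hP_herm, hP_idem]
    rw [this]; exact Matrix.posSemidef_conjTranspose_mul_self _
  have hRk : ∀ k, (R k).PosSemidef := fun k =>
    Matrix.posSemidef_self_mul_conjTranspose _
  have hPQ : ∀ k, P k * Q k = 0 := by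
    intro k
    simp [hQ_def, Matrix.mul_sub, hPM k, hP_idem k]
  have hQP : ∀ k, Q k * P k = 0 := by
    intro k
    simp [hQ_def, Matrix.sub_mul, hMP k, hP_idem k]
  have hMPh : ∀ k, M k * (P k)ᴴ = P k := by intro k; rw [hP_herm]; exact hMP k
  have hPMh : ∀ k, P k * (M k)ᴴ = P k := by
    intro k
    have := congrArg Matrix.conjTranspose (hMP k)
    rw [Matrix.conjTranspose_mul, hP_herm] at this
    exact this
  have hMM : ∀ k, M k * (M k)ᴴ = R k + P k := by
    intro k
    have : R k = M k * (M k)ᴴ - P k := by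
      simp only [hR_def, hQ_def, Matrix.conjTranspose_sub, Matrix.mul_sub, Matrix.sub_mul,
        hMPh k, hPMh k, hMP k, hP_herm, hP_idem]
      abel
    rw [this]; abel
  have hPR : ∀ k, P k * R k = 0 := by
    intro k
    rw [hR_def, ← Matrix.mul_assoc, hPQ k, Matrix.zero_mul]
  have hRP : ∀ k, R k * P k = 0 := by
    intro k
    have hQhP : (Q k)ᴴ * P k = 0 := by
      have := congrArg Matrix.conjTranspose (hPQ k)
      rwa [Matrix.conjTranspose_mul, hP_herm, Matrix.conjTranspose_zero] at this
    rw [hR_def, Matrix.mul_assoc, hQhP, Matrix.mul_zero]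
  have h1mP : ∀ k, (1 - P k : Matrix (Fin (s k)) (Fin (s k)) ℂ).PosSemidef := by
    intro k
    have h : (1 - P k : Matrix (Fin (s k)) (Fin (s k)) ℂ)
        = (1 - P k)ᴴ * (1 - P k) := by
      rw [Matrix.conjTranspose_sub, Matrix.conjTranspose_one, hP_herm]
      rw [Matrix.mul_sub, Matrix.sub_mul, Matrix.sub_mul, hP_idem]
      simp
    rw [h]; exact Matrix.posSemidef_conjTranspose_mul_self _
  -- key bound : R k ≤ c • (1 - P k)
  have hRc : ∀ k, (((c : ℝ) : ℂ) • (1 - P k) - R k).PosSemidef := by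
    intro k
    have ha : (((c : ℝ) : ℂ) • 1 - R k).PosSemidef := by
      have := smul_one_sub_self_mul_conjTranspose_posSemidef (Q k) (1 - Δ) (hgap k)
      simpa [hc_def, hR_def] using this
    have hb := ha.conjTranspose_mul_mul_same (1 - P k)
    have heq : (1 - P k)ᴴ * (((c : ℝ) : ℂ) • 1 - R k) * (1 - P k)
        = ((c : ℝ) : ℂ) • (1 - P k) - R k := by
      simp only [Matrix.conjTranspose_sub, Matrix.conjTranspose_one, hP_herm,
        Matrix.mul_sub, Matrix.sub_mul, Matrix.smul_mul, Matrix.mul_smul, Matrix.one_mul,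
        Matrix.mul_one, hP_idem, hPR, hRP, Matrix.mul_zero, Matrix.zero_mul, smul_zero,
        sub_zero, smul_sub]
      abel
    rwa [heq] at hb
  -- global objects
  set T : Finset (Fin m) → Matrix ((k : Fin m) → Fin (s k)) ((k : Fin m) → Fin (s k)) ℂ :=
    fun S => famKron (fun k => if k ∈ S then R k else P k) with hT_def
  set E : Finset (Fin m) → Matrix ((k : Fin m) → Fin (s k)) ((k : Fin m) → Fin (s k)) ℂ :=
    fun S => famKron (fun k => if k ∈ S then 1 - P k else P k) with hE_def
  have hEpsd : ∀ S, (E S).PosSemidef := by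
    intro S
    apply famKron_posSemidef
    intro k
    split_ifs
    · exact h1mP k
    · exact hPk k
  have hT0 : T ∅ = famKron P := by simp [hT_def]
  have hE0 : E ∅ = famKron P := by simp [hE_def]
  have hMMfam : famKron M * (famKron M)ᴴ = ∑ S : Finset (Fin m), T S := by
    rw [famKron_conjT, famKron_mul]
    rw [show (fun k => M k * (M k)ᴴ) = fun k => R k + P k from funext hMM]
    exact famKron_add_expand R P
  have hOnefam : (1 : Matrix ((k : Fin m) → Fin (s k)) ((k : Fin m) → Fin (s k)) ℂ)
      = ∑ S : Finset (Fin m), E S := by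
    rw [← famKron_one]
    rw [show (fun k => (1 : Matrix (Fin (s k)) (Fin (s k)) ℂ)) = fun k => (1 - P k) + P k
      from funext fun k => by abel]
    exact famKron_add_expand _ P
  -- split off the empty set
  have hMMsum : famKron M * (famKron M)ᴴ
      = famKron P + ∑ S ∈ Finset.univ.erase ∅, T S := by
    rw [hMMfam, ← Finset.add_sum_erase Finset.univ T (Finset.mem_univ ∅), hT0]
  have hOnesum : (1 : Matrix ((k : Fin m) → Fin (s k)) ((k : Fin m) → Fin (s k)) ℂ)
      = famKron P + ∑ S ∈ Finset.univ.erase ∅, E S := by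
    rw [hOnefam, ← Finset.add_sum_erase Finset.univ E (Finset.mem_univ ∅), hE0]
  -- rewrite the target
  have htarget : (((c : ℝ) : ℂ) • (1 : Matrix ((k : Fin m) → Fin (s k)) ((k : Fin m) → Fin (s k)) ℂ)
      + ((1 - c : ℝ) : ℂ) • famKron P - famKron M * (famKron M)ᴴ)
      = ∑ S ∈ Finset.univ.erase ∅, (((c : ℝ) : ℂ) • E S - T S) := by
    rw [hMMsum, hOnesum, Finset.sum_sub_distrib, ← Finset.smul_sum]
    push_cast
    module
  rw [show ((1 - (1 - Δ) ^ 2 : ℝ) : ℂ) = ((1 - c : ℝ) : ℂ) by rw [hc_def]]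
  rw [show (((1 - Δ) ^ 2 : ℝ) : ℂ) = ((c : ℝ) : ℂ) by rw [hc_def]]
  rw [htarget]
  -- each summand is PSD
  apply Finset.sum_induction _ Matrix.PosSemidef
    (fun _ _ ha hb => ha.add hb) (Matrix.PosSemidef.zero)
  intro S hS
  have hSne : S ≠ ∅ := Finset.ne_of_mem_erase hS
  have hcard : 1 ≤ S.card := Finset.one_le_card.mpr (Finset.nonempty_iff_ne_empty.mpr hSne)
  -- famKron of the dominating family
  have hD : famKron (fun k => if k ∈ S then ((c : ℝ) : ℂ) • (1 - P k) else P k)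
      = ((c ^ S.card : ℝ) : ℂ) • E S := by
    rw [show (fun k => if k ∈ S then ((c : ℝ) : ℂ) • (1 - P k) else P k)
        = fun k => (if k ∈ S then ((c : ℝ) : ℂ) else 1) • (if k ∈ S then 1 - P k else P k)
      from funext fun k => by split_ifs <;> simp]
    rw [famKron_smul]
    congr 1
    rw [Finset.prod_ite_mem, Finset.univ_inter, Finset.prod_const]
    push_cast
    ring
  have hmono : (famKron (fun k => if k ∈ S then ((c : ℝ) : ℂ) • (1 - P k) else P k)
      - T S).PosSemidef := by
    apply famKron_mono
    · intro k; split_ifs; exacts [hRk k, hPk k]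
    · intro k
      by_cases hk : k ∈ S
      · simpa [hk] using hRc k
      · simp [hk, Matrix.PosSemidef.zero]
  have hdiff : (((c - c ^ S.card : ℝ) : ℂ) • E S).PosSemidef := by
    apply posSemidef_real_smul (hEpsd S)
    have hpow : c ^ S.card ≤ c := by
      calc c ^ S.card ≤ c ^ 1 := pow_le_pow_of_le_one hc0 hc1 hcard
        _ = c := pow_one c
    exact sub_nonneg.mpr hpow
  have hsplit : ((c : ℝ) : ℂ) • E S - T S
      = (famKron (fun k => if k ∈ S then ((c : ℝ) : ℂ) • (1 - P k) else P k) - T S)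
        + ((c - c ^ S.card : ℝ) : ℂ) • E S := by
    rw [hD]
    push_cast
    module
  rw [hsplit]
  exact hmono.add hdiff
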